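/- arXiv:2405.00511 — 4 statements merged into one kernel-verified Lean document; each statement's English description precedes it below -/
import Mathlib

section
/- With M as above (the symmetric (n+2)×(n+2) matrix with parameters a,b,c,d,e,f), any real eigenvalue λ of M that is not equal to -a is an eigenvalue of the 3×3 matrix R = [[(n-1)a, b, c],[n·b, d, f],[n·c, f, e]]. Conversely, every eigenvalue of R is an eigenvalue of M. -/
open Module.End

private lemma sum_split' {n : ℕ} (F : Fin (n + 2) → ℝ) :
    ∑ j, F j = (∑ j : Fin n, F ⟨j.1, by omega⟩) + F ⟨n, (by omega : n < n + 1 + 1)⟩ + F ⟨n + 1, (by omega : n + 1 < n + 1 + 1)⟩ := by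
  rw [Fin.sum_univ_castSucc, Fin.sum_univ_castSucc]
  congr 1

private lemma eig_iff {m : ℕ} (A : Matrix (Fin m) (Fin m) ℝ) (μ : ℝ) :
    HasEigenvalue (Matrix.toLin' A) μ ↔ ∃ v, v ≠ 0 ∧ A.mulVec v = μ • v := by
  constructor
  · intro h
    obtain ⟨v, hv⟩ := h.exists_hasEigenvector
    exact ⟨v, hv.2, by simpa [Matrix.toLin'_apply] using hv.apply_eq_smul⟩
  · rintro ⟨v, hv0, hv⟩
    exact hasEigenvalue_of_hasEigenvector
      ⟨mem_eigenspace_iff.2 (by simpa [Matrix.toLin'_apply] using hv), hv0⟩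

theorem reduced_matrix_eigenvalues (n : ℕ) (hn : 2 ≤ n)
    (a b c d e f : ℝ) (ha : 0 ≤ a) (hb : 0 ≤ b) (hc : 0 ≤ c)
    (hd : 0 ≤ d) (he : 0 ≤ e) (hf : 0 ≤ f)
    (M : Matrix (Fin (n + 2)) (Fin (n + 2)) ℝ)
    (hoff : ∀ i j : Fin (n + 2), i.val < n → j.val < n → i ≠ j → M i j = a)
    (hdiag : ∀ i : Fin (n + 2), i.val < n → M i i = 0)
    (hcolb : ∀ i : Fin (n + 2), i.val < n →
      M i ⟨n, by omega⟩ = b ∧ M ⟨n, by omega⟩ i = b)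
    (hcolc : ∀ i : Fin (n + 2), i.val < n →
      M i ⟨n + 1, by omega⟩ = c ∧ M ⟨n + 1, by omega⟩ i = c)
    (hdd : M ⟨n, by omega⟩ ⟨n, by omega⟩ = d)
    (hee : M ⟨n + 1, by omega⟩ ⟨n + 1, by omega⟩ = e)
    (hff : M ⟨n, by omega⟩ ⟨n + 1, by omega⟩ = f ∧ M ⟨n + 1, by omega⟩ ⟨n, by omega⟩ = f)
    (R : Matrix (Fin 3) (Fin 3) ℝ)
    (hR : R = !![((n : ℝ) - 1) * a, b, c; (n : ℝ) * b, d, f; (n : ℝ) * c, f, e]) :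
    (∀ μ : ℝ, HasEigenvalue (Matrix.toLin' M) μ → μ ≠ -a →
      HasEigenvalue (Matrix.toLin' R) μ) ∧
    (∀ μ : ℝ, HasEigenvalue (Matrix.toLin' R) μ →
      HasEigenvalue (Matrix.toLin' M) μ) := by
  have hn0 : (n : ℝ) ≠ 0 := by positivity
  constructor
  · -- M eigenvalue (≠ -a) → R eigenvalue
    intro μ hμ hμa
    rw [eig_iff] at hμ ⊢
    obtain ⟨w, hw0, hw⟩ := hμ
    have hweq : ∀ i, ∑ j, M i j * w j = μ * w i := by
      intro i
      have := congrFun hw i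
      simpa [Matrix.mulVec, dotProduct] using this
    set S : ℝ := ∑ j : Fin n, w ⟨j.1, by omega⟩ with hSdef
    have hrow : ∀ i : Fin (n + 2), i.1 < n →
        a * S + b * w ⟨n, by omega⟩ + c * w ⟨n + 1, by omega⟩ = (μ + a) * w i := by
      intro i hi
      have h := hweq i
      rw [sum_split' (fun j => M i j * w j)] at h
      have hsum : (∑ j : Fin n, M i ⟨j.1, by omega⟩ * w ⟨j.1, by omega⟩)
          = a * S - a * w i := by
        have key : ∀ j : Fin n, M i ⟨j.1, by omega⟩ * w ⟨j.1, by omega⟩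
            = a * w ⟨j.1, by omega⟩ - (if j = (⟨i.1, hi⟩ : Fin n) then a * w i else 0) := by
          intro j
          by_cases hj : j = (⟨i.1, hi⟩ : Fin n)
          · subst hj
            have : (⟨i.1, by omega⟩ : Fin (n + 2)) = i := rfl
            rw [this, hdiag i hi, if_pos rfl]
            ring
          · have hne : i ≠ (⟨j.1, by omega⟩ : Fin (n + 2)) := by
              intro hcon
              have hval : i.1 = j.1 := congrArg Fin.val hcon
              exact hj (Fin.ext hval.symm)
            rw [hoff i (⟨j.1, by omega⟩ : Fin (n + 2)) hi j.2 hne, if_neg hj]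
            ring
        rw [Finset.sum_congr rfl (fun j _ => key j), Finset.sum_sub_distrib,
          ← Finset.mul_sum, Finset.sum_ite_eq' Finset.univ _ (fun _ => a * w i)]
        simp [hSdef]
      rw [hsum, (hcolb i hi).1, (hcolc i hi).1] at h
      linear_combination h
    have hrn : b * S + d * w ⟨n, by omega⟩ + f * w ⟨n + 1, by omega⟩ = μ * w ⟨n, by omega⟩ := by
      have h := hweq ⟨n, by omega⟩
      rw [sum_split' (fun j => M ⟨n, by omega⟩ j * w j)] at h
      have hsum : (∑ j : Fin n, M ⟨n, by omega⟩ ⟨j.1, by omega⟩ * w ⟨j.1, by omega⟩) = b * S := by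
        rw [Finset.sum_congr rfl (fun (j : Fin n) _ => by
          rw [(hcolb ⟨j.1, by omega⟩ j.2).2]), ← Finset.mul_sum]
      rw [hsum, hdd, hff.1] at h
      linear_combination h
    have hrm : c * S + f * w ⟨n, by omega⟩ + e * w ⟨n + 1, by omega⟩
        = μ * w ⟨n + 1, by omega⟩ := by
      have h := hweq ⟨n + 1, by omega⟩
      rw [sum_split' (fun j => M ⟨n + 1, by omega⟩ j * w j)] at h
      have hsum : (∑ j : Fin n, M ⟨n + 1, by omega⟩ ⟨j.1, by omega⟩ * w ⟨j.1, by omega⟩)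
          = c * S := by
        rw [Finset.sum_congr rfl (fun (j : Fin n) _ => by
          rw [(hcolc ⟨j.1, by omega⟩ j.2).2]), ← Finset.mul_sum]
      rw [hsum, hff.2, hee] at h
      linear_combination h
    have hkey : (n : ℝ) * a * S + (n : ℝ) * b * w ⟨n, by omega⟩
        + (n : ℝ) * c * w ⟨n + 1, by omega⟩ = (μ + a) * S := by
      have h1 : ∑ _j : Fin n, (a * S + b * w ⟨n, by omega⟩ + c * w ⟨n + 1, by omega⟩)
          = ∑ j : Fin n, (μ + a) * w ⟨j.1, by omega⟩ :=
        Finset.sum_congr rfl fun j _ => hrow ⟨j.1, by omega⟩ j.2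
      rw [Finset.sum_const, ← Finset.mul_sum, Finset.card_univ, Fintype.card_fin,
        nsmul_eq_mul] at h1
      linear_combination h1
    refine ⟨![S, (n : ℝ) * w ⟨n, by omega⟩, (n : ℝ) * w ⟨n + 1, by omega⟩], ?_, ?_⟩
    · intro hv
      have hS0 : S = 0 := congrFun hv 0
      have hwn0 : w ⟨n, by omega⟩ = 0 := by
        have := congrFun hv 1
        simp only [Matrix.cons_val_one, Matrix.head_cons, Pi.zero_apply] at this
        rcases mul_eq_zero.1 this with h | h
        · exact absurd h hn0
        · exact h
      have hwm0 : w ⟨n + 1, by omega⟩ = 0 := by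
        have := congrFun hv 2
        simp only [Matrix.cons_val_two, Matrix.tail_cons, Matrix.head_cons,
          Pi.zero_apply] at this
        rcases mul_eq_zero.1 this with h | h
        · exact absurd h hn0
        · exact h
      apply hw0
      funext i
      show w i = 0
      by_cases hi : i.1 < n
      · have h0 := hrow i hi
        rw [hS0, hwn0, hwm0] at h0
        have h0' : (μ + a) * w i = 0 := by linarith
        rcases mul_eq_zero.1 h0' with h | h
        · exact absurd (by linarith : μ = -a) hμa
        · exact h
      · have h' : i.1 = n ∨ i.1 = n + 1 := by omega
        rcases h' with h' | h'
        · rw [show i = (⟨n, by omega⟩ : Fin (n + 2)) from Fin.ext h']; exact hwn0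
        · rw [show i = (⟨n + 1, by omega⟩ : Fin (n + 2)) from Fin.ext h']; exact hwm0
    · funext k
      fin_cases k <;>
        simp [hR, Matrix.mulVec, dotProduct, Fin.sum_univ_three]
      · linear_combination hkey
      · linear_combination (n : ℝ) * hrn
      · linear_combination (n : ℝ) * hrm
  · -- R eigenvalue → M eigenvalue
    intro μ hμ
    rw [eig_iff] at hμ ⊢
    obtain ⟨v, hv0, hv⟩ := hμ
    have h0 : ((n : ℝ) - 1) * a * v 0 + b * v 1 + c * v 2 = μ * v 0 := by
      have := congrFun hv 0
      simp [hR, Matrix.mulVec, dotProduct, Fin.sum_univ_three] at this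
      linear_combination this
    have h1 : (n : ℝ) * b * v 0 + d * v 1 + f * v 2 = μ * v 1 := by
      have := congrFun hv 1
      simp [hR, Matrix.mulVec, dotProduct, Fin.sum_univ_three] at this
      linear_combination this
    have h2 : (n : ℝ) * c * v 0 + f * v 1 + e * v 2 = μ * v 2 := by
      have := congrFun hv 2
      simp [hR, Matrix.mulVec, dotProduct, Fin.sum_univ_three] at this
      linear_combination this
    set w : Fin (n + 2) → ℝ :=
      fun i => if i.1 < n then v 0 else if i.1 = n then v 1 else v 2 with hwdef
    have hwlt : ∀ i : Fin (n + 2), i.1 < n → w i = v 0 := fun i hi => by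
      simp [hwdef, hi]
    have hwn : w ⟨n, by omega⟩ = v 1 := by
      simp [hwdef]
    have hwm : w ⟨n + 1, by omega⟩ = v 2 := by
      simp only [hwdef]
      rw [if_neg (by omega), if_neg (by omega)]
    refine ⟨w, ?_, ?_⟩
    · intro hcon
      apply hv0
      funext k
      fin_cases k
      · have := congrFun hcon ⟨0, by omega⟩
        rw [hwlt ⟨0, by omega⟩ (show (0:ℕ) < n by omega)] at this
        exact this
      · have := congrFun hcon ⟨n, by omega⟩
        rw [hwn] at this
        exact this
      · have := congrFun hcon ⟨n + 1, by omega⟩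
        rw [hwm] at this
        exact this
    · funext i
      have hmv : M.mulVec w i = ∑ j, M i j * w j := by
        simp [Matrix.mulVec, dotProduct]
      rw [hmv, Pi.smul_apply, smul_eq_mul, sum_split' (fun j => M i j * w j)]
      by_cases hi : i.1 < n
      · have hsum : (∑ j : Fin n, M i ⟨j.1, by omega⟩ * w ⟨j.1, by omega⟩)
            = ((n : ℝ) - 1) * a * v 0 := by
          have key : ∀ j : Fin n, M i ⟨j.1, by omega⟩ * w ⟨j.1, by omega⟩
              = a * v 0 - (if j = (⟨i.1, hi⟩ : Fin n) then a * v 0 else 0) := by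
            intro j
            rw [hwlt ⟨j.1, by omega⟩ j.2]
            by_cases hj : j = (⟨i.1, hi⟩ : Fin n)
            · subst hj
              have : (⟨i.1, by omega⟩ : Fin (n + 2)) = i := rfl
              rw [this, hdiag i hi, if_pos rfl]
              ring
            · have hne : i ≠ (⟨j.1, by omega⟩ : Fin (n + 2)) := by
                intro hcon
                have hval : i.1 = j.1 := congrArg Fin.val hcon
                exact hj (Fin.ext hval.symm)
              rw [hoff i (⟨j.1, by omega⟩ : Fin (n + 2)) hi j.2 hne, if_neg hj]
              ring
          rw [Finset.sum_congr rfl (fun j _ => key j), Finset.sum_sub_distrib,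
            Finset.sum_const, Finset.sum_ite_eq' Finset.univ _ (fun _ => a * v 0),
            Finset.card_univ, Fintype.card_fin, nsmul_eq_mul]
          simp
          ring
        rw [hsum, (hcolb i hi).1, (hcolc i hi).1, hwn, hwm, hwlt i hi]
        linear_combination h0
      · have h' : i.1 = n ∨ i.1 = n + 1 := by omega
        rcases h' with h' | h'
        · rw [show i = (⟨n, by omega⟩ : Fin (n + 2)) from Fin.ext h']
          have hsum : (∑ j : Fin n, M ⟨n, by omega⟩ ⟨j.1, by omega⟩ * w ⟨j.1, by omega⟩)
              = (n : ℝ) * (b * v 0) := by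
            rw [Finset.sum_congr rfl (fun (j : Fin n) _ => by
              rw [(hcolb ⟨j.1, by omega⟩ j.2).2, hwlt ⟨j.1, by omega⟩ j.2]),
              Finset.sum_const, Finset.card_univ, Fintype.card_fin, nsmul_eq_mul]
          rw [hsum, hdd, hff.1, hwn, hwm]
          linear_combination h1
        · rw [show i = (⟨n + 1, by omega⟩ : Fin (n + 2)) from Fin.ext h']
          have hsum : (∑ j : Fin n, M ⟨n + 1, by omega⟩ ⟨j.1, by omega⟩ * w ⟨j.1, by omega⟩)
              = (n : ℝ) * (c * v 0) := by
            rw [Finset.sum_congr rfl (fun (j : Fin n) _ => by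
              rw [(hcolc ⟨j.1, by omega⟩ j.2).2, hwlt ⟨j.1, by omega⟩ j.2]),
              Finset.sum_const, Finset.card_univ, Fintype.card_fin, nsmul_eq_mul]
          rw [hsum, hff.2, hee, hwn, hwm]
          linear_combination h2
end

section
/- The 4×4 real symmetric matrix H = [[0,1,2,2],[1,0,2,2],[2,2,6,8],[2,2,8,8]] has exactly one positive eigenvalue; its eigenvalues are (3/2)(5+√33), -(3/2)(√33-5), -1, and 0. -/
open Polynomial

set_option maxHeartbeats 1000000 in
lemma hessian_L2_charmatrix :
    (!![0, 1, 2, 2; 1, 0, 2, 2; 2, 2, 6, 8; 2, 2, 8, 8] : Matrix (Fin 4) (Fin 4) ℝ).charmatrix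
      = !![X, -1, -2, -2; -1, X, -2, -2; -2, -2, X - 6, -8; -2, -2, -8, X - 8] := by
  ext i j
  fin_cases i <;> fin_cases j <;>
    simp [Matrix.charmatrix_apply, Matrix.diagonal_apply, Matrix.one_apply, map_ofNat,
      Matrix.vecHead, Matrix.vecTail]

set_option maxHeartbeats 2000000 in
lemma hessian_L2_charpoly :
    (!![0, 1, 2, 2; 1, 0, 2, 2; 2, 2, 6, 8; 2, 2, 8, 8] : Matrix (Fin 4) (Fin 4) ℝ).charpoly
      = X ^ 4 - 14 * X ^ 3 - 33 * X ^ 2 - 18 * X := by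
  rw [Matrix.charpoly, hessian_L2_charmatrix]
  simp [Matrix.det_succ_row_zero, Fin.sum_univ_succ, Fin.succAbove, Fin.castSucc,
    Fin.castAdd, Fin.castLE]
  ring

lemma hessian_L2_key_poly (a b : ℝ) (hs : a + b = 15) (hp : a * b = -18) :
    (X ^ 4 - 14 * X ^ 3 - 33 * X ^ 2 - 18 * X : ℝ[X])
      = (X - C a) * ((X - C b) * ((X + 1) * X)) := by
  have h1 : C a + C b = (15 : ℝ[X]) := by rw [← C_add, hs]; norm_num [map_ofNat]
  have h2 : C a * C b = (-18 : ℝ[X]) := by rw [← C_mul, hp]; simp [map_ofNat]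
  have expand : (X - C a) * (X - C b) = X ^ 2 - (C a + C b) * X + C a * C b := by ring
  rw [show (X - C a) * ((X - C b) * ((X + 1) * X)) =
      ((X - C a) * (X - C b)) * ((X + 1) * X) by ring, expand, h1, h2]
  ring

theorem hessian_L2_eigenvalues :
    let H : Matrix (Fin 4) (Fin 4) ℝ :=
      !![0, 1, 2, 2; 1, 0, 2, 2; 2, 2, 6, 8; 2, 2, 8, 8]
    let l : Multiset ℝ :=
      {(3 / 2) * (5 + Real.sqrt 33), -((3 / 2) * (Real.sqrt 33 - 5)), -1, 0}
    H.charpoly = (l.map fun r => X - C r).prod ∧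
      l.countP (fun r => 0 < r) = 1 := by
  intro H l
  have h33 : Real.sqrt 33 ^ 2 = 33 := Real.sq_sqrt (by norm_num)
  have hsqrt : (5 : ℝ) < Real.sqrt 33 := by
    nlinarith [Real.sqrt_nonneg 33]
  have hs : (3 / 2) * (5 + Real.sqrt 33) + -((3 / 2) * (Real.sqrt 33 - 5)) = 15 := by ring
  have hp : (3 / 2) * (5 + Real.sqrt 33) * -((3 / 2) * (Real.sqrt 33 - 5)) = -18 := by
    nlinarith [h33]
  constructor
  · show H.charpoly = _
    rw [hessian_L2_charpoly]
    show _ = (((3 / 2) * (5 + Real.sqrt 33) ::ₘ -((3 / 2) * (Real.sqrt 33 - 5)) ::ₘ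
        (-1 : ℝ) ::ₘ {(0 : ℝ)}).map fun r => X - C r).prod
    simp only [Multiset.map_cons, Multiset.prod_cons, Multiset.map_singleton,
      Multiset.prod_singleton, map_neg, map_one, map_zero, sub_zero, sub_neg_eq_add]
    rw [show (X + C ((3 / 2) * (Real.sqrt 33 - 5)) : ℝ[X])
        = X - C (-((3 / 2) * (Real.sqrt 33 - 5))) by rw [map_neg]; ring]
    exact hessian_L2_key_poly _ _ hs hp
  · show ((3 / 2) * (5 + Real.sqrt 33) ::ₘ -((3 / 2) * (Real.sqrt 33 - 5)) ::ₘ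
        (-1 : ℝ) ::ₘ {(0 : ℝ)}).countP (fun r => 0 < r) = 1
    have ha : (0 : ℝ) < (3 / 2) * (5 + Real.sqrt 33) := by positivity
    have hb : ¬ (0 : ℝ) < -((3 / 2) * (Real.sqrt 33 - 5)) := by
      simp only [not_lt]
      nlinarith
    rw [show ({(0 : ℝ)} : Multiset ℝ) = (0 : ℝ) ::ₘ 0 from rfl]
    simp only [Multiset.countP_cons, Multiset.countP_zero, if_pos ha, if_neg hb]
    norm_num
end

section
/- The coloured independence polynomial of the leafy star L_n satisfies C(L_n; x, x_1, ..., x_n) = (x+1)^n · (x + ∏_{i=1}^n (x + x_i + 1)), where x is the variable of all bound (black) vertices and x_i are the variables of the n free coloured vertices. -/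
open scoped Classical

/-- The leafy star `L_n` on `3n+1` vertices: vertex `none` is the centre; for each
`i : Fin n`, `some (i, 0)` is the `i`-th (free, coloured) middle vertex, `some (i, 1)` is
the pendant leaf attached to that middle vertex, and `some (i, 2)` is a leaf attached
to the centre. -/
def leafyStar (n : ℕ) : SimpleGraph (Option (Fin n × Fin 3)) :=
  SimpleGraph.fromRel (fun u v =>
    (∃ i : Fin n, u = none ∧ (v = some (i, 0) ∨ v = some (i, 2))) ∨
    (∃ i : Fin n, u = some (i, 0) ∧ v = some (i, 1)))

/-- An independent set in a simple graph. -/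
def IsIndep {V : Type*} (G : SimpleGraph V) (S : Set V) : Prop :=
  S.Pairwise fun u v => ¬ G.Adj u v

private def lsP {n : ℕ} (b : Bool) (g : Fin n → Bool × Bool × Bool) :
    Option (Fin n × Fin 3) → Bool
  | none => b
  | some (i, j) => if j = 0 then (g i).1 else if j = 1 then (g i).2.1 else (g i).2.2

private def lsS {n : ℕ} (b : Bool) (g : Fin n → Bool × Bool × Bool) :
    Finset (Option (Fin n × Fin 3)) :=
  Finset.univ.filter (fun v => lsP b g v = true)

private def lsT (x y : ℝ) (b : Bool) (t : Bool × Bool × Bool) : ℝ :=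
  if ((b = true → t.1 = false ∧ t.2.2 = false) ∧ ¬(t.1 = true ∧ t.2.1 = true)) then
    (if t.1 then y else 1) * (if t.2.1 then x else 1) * (if t.2.2 then x else 1)
  else 0

private lemma mem_lsS {n : ℕ} {b : Bool} {g : Fin n → Bool × Bool × Bool}
    {v : Option (Fin n × Fin 3)} : v ∈ lsS b g ↔ lsP b g v = true := by
  simp [lsS]

private lemma lsS_bijective (n : ℕ) :
    Function.Bijective (fun p : Bool × (Fin n → Bool × Bool × Bool) => lsS p.1 p.2) := by
  constructor
  · rintro ⟨b, g⟩ ⟨b', g'⟩ h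
    have hm : ∀ v, (lsP b g v = true) ↔ (lsP b' g' v = true) := by
      intro v
      rw [← mem_lsS, ← mem_lsS]
      simp only at h
      rw [h]
    have hb : b = b' := by
      have := hm none
      simp [lsP] at this
      exact this
    have hg : g = g' := by
      funext i
      have h0 := hm (some (i, 0))
      have h1 := hm (some (i, 1))
      have h2 := hm (some (i, 2))
      simp [lsP] at h0 h1 h2
      exact Prod.ext h0 (Prod.ext h1 h2)
    simp [hb, hg]
  · intro S
    refine ⟨⟨decide (none ∈ S), fun i =>
      (decide (some (i, 0) ∈ S), decide (some (i, 1) ∈ S), decide (some (i, 2) ∈ S))⟩, ?_⟩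
    simp only
    ext v
    rcases v with _ | ⟨i, j⟩
    · simp [mem_lsS, lsP]
    · fin_cases j <;> simp [mem_lsS, lsP]

private lemma indep_lsS_iff {n : ℕ} (b : Bool) (g : Fin n → Bool × Bool × Bool) :
    IsIndep (leafyStar n) ↑(lsS b g) ↔
      ∀ i : Fin n, (b = true → (g i).1 = false ∧ (g i).2.2 = false) ∧
        ¬((g i).1 = true ∧ (g i).2.1 = true) := by
  constructor
  · intro h i
    have adj01 : (leafyStar n).Adj (some (i, 0)) (some (i, 1)) := by
      simp [leafyStar, SimpleGraph.fromRel_adj]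
    have adjc0 : (leafyStar n).Adj none (some (i, 0)) := by
      simp [leafyStar, SimpleGraph.fromRel_adj]
    have adjc2 : (leafyStar n).Adj none (some (i, 2)) := by
      simp [leafyStar, SimpleGraph.fromRel_adj]
    constructor
    · intro hb
      constructor
      · by_contra h0
        have h0' : (g i).1 = true := by simpa using h0
        exact h (by simp [mem_lsS, lsP, hb]) (by simp [mem_lsS, lsP, h0'])
          (by simp) adjc0
      · by_contra h2
        have h2' : (g i).2.2 = true := by simpa using h2
        exact h (by simp [mem_lsS, lsP, hb]) (by simp [mem_lsS, lsP, h2'])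
          (by simp) adjc2
    · rintro ⟨h0, h1⟩
      exact h (by simp [mem_lsS, lsP, h0]) (by simp [mem_lsS, lsP, h1])
        (by simp) adj01
  · intro h
    rintro u hu v hv hne hadj
    simp only [Finset.coe_sort_coe, Finset.mem_coe, mem_lsS] at hu hv
    rw [leafyStar, SimpleGraph.fromRel_adj] at hadj
    obtain ⟨-, hr | hr⟩ := hadj
    all_goals {
      rcases hr with ⟨i, rfl, (rfl | rfl)⟩ | ⟨i, rfl, rfl⟩
      all_goals simp [lsP] at hu hv
      all_goals (obtain ⟨hA, hB⟩ := h i; simp_all)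
    }

private lemma sum_lsT_true (x y : ℝ) : ∑ t : Bool × Bool × Bool, lsT x y true t = x + 1 := by
  simp [lsT, Fintype.sum_prod_type, Fintype.sum_bool]
  try ring

private lemma sum_lsT_false (x y : ℝ) :
    ∑ t : Bool × Bool × Bool, lsT x y false t = (x + 1) * (x + y + 1) := by
  simp [lsT, Fintype.sum_prod_type, Fintype.sum_bool]
  try ring

theorem colouredIndepPoly_leafyStar (n : ℕ) (x : ℝ) (xs : Fin n → ℝ) :
    (∑ S : Finset (Option (Fin n × Fin 3)),
        if IsIndep (leafyStar n) ↑S then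
          ∏ v ∈ S, (match v with
            | some (i, ⟨0, _⟩) => xs i
            | _ => x)
        else 0)
      = (x + 1) ^ n * (x + ∏ i : Fin n, (x + xs i + 1)) := by
  classical
  rw [← Fintype.sum_bijective (fun p : Bool × (Fin n → Bool × Bool × Bool) => lsS p.1 p.2)
    (lsS_bijective n) _ _ (fun p => rfl)]
  have w0 : ∀ i : Fin n, (match (some (i, (0 : Fin 3)) : Option (Fin n × Fin 3)) with
      | some (i, ⟨0, _⟩) => xs i | _ => x) = xs i := fun i => rfl
  have w1 : ∀ i : Fin n, (match (some (i, (1 : Fin 3)) : Option (Fin n × Fin 3)) with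
      | some (i, ⟨0, _⟩) => xs i | _ => x) = x := fun i => rfl
  have w2 : ∀ i : Fin n, (match (some (i, (2 : Fin 3)) : Option (Fin n × Fin 3)) with
      | some (i, ⟨0, _⟩) => xs i | _ => x) = x := fun i => rfl
  have key : ∀ (b : Bool) (g : Fin n → Bool × Bool × Bool),
      (if IsIndep (leafyStar n) ↑(lsS b g) then
          ∏ v ∈ lsS b g, (match v with
            | some (i, ⟨0, _⟩) => xs i
            | _ => x)
        else 0)
      = (if b then x else 1) * ∏ i : Fin n, lsT x (xs i) b (g i) := by
    intro b g
    rw [indep_lsS_iff]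
    have hprod : (∏ v ∈ lsS b g, (match v with
            | some (i, ⟨0, _⟩) => xs i
            | _ => x))
        = (if b then x else 1) *
          ∏ i : Fin n, ((if (g i).1 then xs i else 1) * (if (g i).2.1 then x else 1) *
                (if (g i).2.2 then x else 1)) := by
      rw [lsS, Finset.prod_filter, Fintype.prod_option, Fintype.prod_prod_type]
      have hc : (if lsP b g none = true then (match (none : Option (Fin n × Fin 3)) with
          | some (i, ⟨0, _⟩) => xs i | _ => x) else 1) = (if b then x else 1) := by
        simp [lsP]
        cases b <;> simp
      rw [hc]
      congr 1
      refine Finset.prod_congr rfl fun i _ => ?_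
      rw [Fin.prod_univ_three]
      simp only [lsP, w0 i, w1 i, w2 i]
      norm_num [Fin.ext_iff]
    by_cases hind : ∀ i : Fin n, (b = true → (g i).1 = false ∧ (g i).2.2 = false) ∧
        ¬((g i).1 = true ∧ (g i).2.1 = true)
    · rw [if_pos hind, hprod]
      congr 1
      exact Finset.prod_congr rfl fun i _ => (if_pos (hind i)).symm
    · rw [if_neg hind]
      refine (mul_eq_zero_of_right _ ?_).symm
      push_neg at hind
      obtain ⟨i, hi⟩ := hind
      refine Finset.prod_eq_zero (Finset.mem_univ i) ?_
      rw [lsT, if_neg]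
      intro hc
      exact hc.2 (hi hc.1)
  calc (∑ p : Bool × (Fin n → Bool × Bool × Bool),
        if IsIndep (leafyStar n) ↑(lsS p.1 p.2) then
          ∏ v ∈ lsS p.1 p.2, (match v with
            | some (i, ⟨0, _⟩) => xs i
            | _ => x)
        else 0)
      = ∑ b : Bool, ∑ g : Fin n → Bool × Bool × Bool,
          (if b then x else 1) * ∏ i : Fin n, lsT x (xs i) b (g i) := by
        rw [Fintype.sum_prod_type]
        exact Finset.sum_congr rfl fun b _ => Finset.sum_congr rfl fun g _ => key b g
    _ = ∑ b : Bool, (if b then x else 1) * ∏ i : Fin n,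
          ∑ t : Bool × Bool × Bool, lsT x (xs i) b t := by
        refine Finset.sum_congr rfl fun b _ => ?_
        rw [← Finset.mul_sum, ← Fintype.prod_sum (fun i t => lsT x (xs i) b t)]
    _ = (x + 1) ^ n * (x + ∏ i : Fin n, (x + xs i + 1)) := by
        rw [Fintype.sum_bool]
        simp only [if_true, if_false, sum_lsT_true, sum_lsT_false, one_mul]
        rw [Finset.prod_const, Finset.prod_mul_distrib, Finset.prod_const]
        simp [Finset.card_univ]
        ring
end

section
/- For n ≥ 1, the support of the polynomial x·y^{n-1} + ∏_{i=1}^n (x + x_i + y) in variables x, y, x_1, ..., x_n equals the support of ∏_{i=1}^n (x + x_i + y). -/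
open MvPolynomial

private lemma coeff_mul_le' {σ : Type*} [DecidableEq σ] (A B : MvPolynomial σ ℝ)
    (hA : ∀ d, 0 ≤ coeff d A) (hB : ∀ d, 0 ≤ coeff d B) (a b : σ →₀ ℕ) :
    coeff a A * coeff b B ≤ coeff (a + b) (A * B) := by
  rw [coeff_mul]
  refine Finset.single_le_sum (f := fun p : (σ →₀ ℕ) × (σ →₀ ℕ) => coeff p.1 A * coeff p.2 B)
    (a := (a, b)) ?_ ?_
  · intro p _; exact mul_nonneg (hA _) (hB _)
  · exact Finset.HasAntidiagonal.mem_antidiagonal.2 rfl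

private lemma coeff_prod_nonneg' {σ ι : Type*} [DecidableEq σ] (s : Finset ι) (f : ι → MvPolynomial σ ℝ)
    (h : ∀ i ∈ s, ∀ d, 0 ≤ coeff d (f i)) : ∀ d, 0 ≤ coeff d (∏ i ∈ s, f i) := by
  induction s using Finset.cons_induction with
  | empty =>
      intro d
      rw [Finset.prod_empty, coeff_one]
      split_ifs <;> norm_num
  | cons i s hi ih =>
      intro d
      rw [Finset.prod_cons, coeff_mul]
      refine Finset.sum_nonneg fun p _ => mul_nonneg (h i (Finset.mem_cons_self _ _) _) ?_
      exact ih (fun j hj => h j (Finset.mem_cons.2 (Or.inr hj))) _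

private lemma prod_coeff_le' {σ ι : Type*} [DecidableEq σ] (s : Finset ι) (f : ι → MvPolynomial σ ℝ)
    (g : ι → σ →₀ ℕ) (h : ∀ i ∈ s, ∀ d, 0 ≤ coeff d (f i)) :
    (∏ i ∈ s, coeff (g i) (f i)) ≤ coeff (∑ i ∈ s, g i) (∏ i ∈ s, f i) := by
  induction s using Finset.cons_induction with
  | empty => simp [coeff_one]
  | cons i s hi ih =>
      rw [Finset.prod_cons, Finset.prod_cons, Finset.sum_cons]
      have h1 : ∀ j ∈ s, ∀ d, 0 ≤ coeff d (f j) :=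
        fun j hj => h j (Finset.mem_cons.2 (Or.inr hj))
      calc coeff (g i) (f i) * ∏ j ∈ s, coeff (g j) (f j)
          ≤ coeff (g i) (f i) * coeff (∑ j ∈ s, g j) (∏ j ∈ s, f j) :=
            mul_le_mul_of_nonneg_left (ih h1) (h i (Finset.mem_cons_self _ _) _)
        _ ≤ coeff (g i + ∑ j ∈ s, g j) (f i * ∏ j ∈ s, f j) :=
            coeff_mul_le' _ _ (h i (Finset.mem_cons_self _ _))
              (coeff_prod_nonneg' s f h1) _ _

theorem support_p_eq_support_product (n : ℕ) (hn : 1 ≤ n) :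
    let x : MvPolynomial (Fin (n + 2)) ℝ := X 0
    let y : MvPolynomial (Fin (n + 2)) ℝ := X 1
    (x * y ^ (n - 1) + ∏ i : Fin n, (x + X i.succ.succ + y)).support
      = (∏ i : Fin n, (x + X i.succ.succ + y)).support := by
  intro x y
  set P : MvPolynomial (Fin (n + 2)) ℝ := ∏ i : Fin n, (x + X i.succ.succ + y) with hP
  have hnn : ∀ i : Fin n, ∀ d, 0 ≤ coeff d (x + X i.succ.succ + y) := by
    intro i d
    simp only [x, y, coeff_add, coeff_X']
    split_ifs <;> norm_num
  set m : Fin (n + 2) →₀ ℕ := Finsupp.single 0 1 + Finsupp.single 1 (n - 1) with hm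
  have hxy : x * y ^ (n - 1) = monomial m 1 := by
    show X 0 * X 1 ^ (n - 1) = _
    rw [X_pow_eq_monomial, X, monomial_mul, one_mul]
  -- positivity of coeff m P
  set i₀ : Fin n := ⟨0, hn⟩ with hi₀
  set g : Fin n → (Fin (n + 2) →₀ ℕ) :=
    fun i => if i = i₀ then Finsupp.single 0 1 else Finsupp.single 1 1 with hg
  have hcoe : ∀ i : Fin n, coeff (g i) (x + X i.succ.succ + y) = 1 := by
    intro i
    have h20 : (i.succ.succ : Fin (n + 2)) ≠ 0 := by
      simp [Fin.ext_iff, Fin.val_succ]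
    have h21 : (i.succ.succ : Fin (n + 2)) ≠ 1 := by
      simp [Fin.ext_iff, Fin.val_succ]
    have h01 : (0 : Fin (n + 2)) ≠ 1 := by
      simp [Fin.ext_iff]
    simp only [x, y, hg, coeff_add, coeff_X']
    by_cases hi : i = i₀
    · subst hi
      simp [Finsupp.single_eq_single_iff, h20, h21, h01, h01.symm, h20.symm, h21.symm]
    · simp [hi, Finsupp.single_eq_single_iff, h20, h21, h01, h01.symm, h20.symm, h21.symm]
  have hsum : ∑ i : Fin n, g i = m := by
    rw [← Finset.add_sum_erase _ g (Finset.mem_univ i₀)]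
    have : ∀ j ∈ Finset.univ.erase i₀, g j = Finsupp.single 1 1 := by
      intro j hj
      simp [hg, (Finset.mem_erase.1 hj).1]
    rw [Finset.sum_congr rfl this, Finset.sum_const, Finset.card_erase_of_mem (Finset.mem_univ i₀),
      Finset.card_univ, Fintype.card_fin, Finsupp.smul_single, hm]
    simp [hg]
  have hPm : (1 : ℝ) ≤ coeff m P := by
    have h := prod_coeff_le' Finset.univ (fun i : Fin n => x + X i.succ.succ + y) g
      (fun i _ => hnn i)
    rw [hsum] at h
    calc (1 : ℝ) = ∏ i : Fin n, coeff (g i) (x + X i.succ.succ + y) := by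
          simp [hcoe]
      _ ≤ coeff m P := h
  have hPm0 : coeff m P ≠ 0 := by linarith
  ext d
  simp only [mem_support_iff, coeff_add, hxy, coeff_monomial]
  by_cases hd : m = d
  · subst hd
    rw [if_pos rfl]
    constructor
    · intro _; exact hPm0
    · intro _ hc; linarith
  · simp [hd]
end
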